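/- Fix real numbers a, b with 1 < a ≤ b. Then, as t tends to +∞: t·I₂(a,b;t) tends to ∫_{-a}^{-1} (1/√(z²−1))·√((b−z)/(a+z)) dz; t·J₂(a,b;t) tends to ∫_{-a}^{-1} (1/√(z²−1))·√((a+z)/(b−z)) dz; t·I₄(a,b;t) tends to ∫_{1}^{b} (1/√(z²−1))·√((b−z)/(a+z)) dz; and t·J₄(a,b;t) tends to ∫_{1}^{b} (1/√(z²−1))·√((a+z)/(b−z)) dz. -/

import Mathlib

open MeasureTheory intervalIntegral Real Filter Topology

/-- Period integral `I₁`. -/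
noncomputable def I1 (a b t : ℝ) : ℝ :=
  ∫ z in (-t)..(-a), Real.sqrt ((b - z) / ((t ^ 2 - z ^ 2) * (z ^ 2 - 1) * (-z - a)))

/-- Period integral `J₁`. -/
noncomputable def J1 (a b t : ℝ) : ℝ :=
  ∫ z in (-t)..(-a), Real.sqrt ((-z - a) / ((t ^ 2 - z ^ 2) * (z ^ 2 - 1) * (b - z)))

/-- Period integral `I₂`. -/
noncomputable def I2 (a b t : ℝ) : ℝ :=
  ∫ z in (-a)..(-1), Real.sqrt ((b - z) / ((t ^ 2 - z ^ 2) * (z ^ 2 - 1) * (z + a)))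

/-- Period integral `J₂`. -/
noncomputable def J2 (a b t : ℝ) : ℝ :=
  ∫ z in (-a)..(-1), Real.sqrt ((z + a) / ((t ^ 2 - z ^ 2) * (z ^ 2 - 1) * (b - z)))

/-- Period integral `I₄`. -/
noncomputable def I4 (a b t : ℝ) : ℝ :=
  ∫ z in (1:ℝ)..b, Real.sqrt ((b - z) / ((t ^ 2 - z ^ 2) * (z ^ 2 - 1) * (z + a)))

/-- Period integral `J₄`. -/
noncomputable def J4 (a b t : ℝ) : ℝ :=
  ∫ z in (1:ℝ)..b, Real.sqrt ((z + a) / ((t ^ 2 - z ^ 2) * (z ^ 2 - 1) * (b - z)))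

/-- Period integral `I₅`. -/
noncomputable def I5 (a b t : ℝ) : ℝ :=
  ∫ z in b..t, Real.sqrt ((z - b) / ((t ^ 2 - z ^ 2) * (z ^ 2 - 1) * (z + a)))

/-- Period integral `J₅`. -/
noncomputable def J5 (a b t : ℝ) : ℝ :=
  ∫ z in b..t, Real.sqrt ((z + a) / ((t ^ 2 - z ^ 2) * (z ^ 2 - 1) * (z - b)))

/-- The period quotient `Q(a,b;t)`. -/
noncomputable def Q (a b t : ℝ) : ℝ :=
  (I1 a b t + I5 a b t) / (I2 a b t + I4 a b t)
    - (J1 a b t + J5 a b t) / (J2 a b t + J4 a b t)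

lemma ratio_tendsto (z : ℝ) :
    Tendsto (fun t : ℝ => t / Real.sqrt (t ^ 2 - z ^ 2)) atTop (𝓝 1) := by
  have h0 : Tendsto (fun t : ℝ => z ^ 2 / t ^ 2) atTop (𝓝 0) :=
    Tendsto.div_atTop tendsto_const_nhds (tendsto_pow_atTop two_ne_zero)
  have h1 : Tendsto (fun t : ℝ => 1 - z ^ 2 / t ^ 2) atTop (𝓝 1) := by
    simpa using tendsto_const_nhds.sub h0
  have hs : Tendsto (fun t : ℝ => Real.sqrt (1 - z ^ 2 / t ^ 2)) atTop (𝓝 1) := by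
    have := (Real.continuous_sqrt.tendsto 1).comp h1
    simpa [Function.comp_def] using this
  have h2 : Tendsto (fun t : ℝ => 1 / Real.sqrt (1 - z ^ 2 / t ^ 2)) atTop (𝓝 1) := by
    simpa [one_div] using hs.inv₀ one_ne_zero
  refine Tendsto.congr' ?_ h2
  filter_upwards [eventually_ge_atTop (|z| + 1)] with t ht
  have hz : |z| < t := lt_of_lt_of_le (lt_add_one _) ht
  have ht0 : 0 < t := lt_of_le_of_lt (abs_nonneg z) hz
  have key : t ^ 2 - z ^ 2 = t ^ 2 * (1 - z ^ 2 / t ^ 2) := by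
    field_simp
  rw [key, Real.sqrt_mul (by positivity), Real.sqrt_sq ht0.le,
    ← mul_div_mul_left 1 (Real.sqrt (1 - z ^ 2 / t ^ 2)) ht0.ne', mul_one]

lemma integrableOn_bound (c d C : ℝ) (hcd : c < d) (hC : 0 ≤ C) :
    IntegrableOn (fun z => Real.sqrt (C / ((z - c) * (d - z)))) (Set.Ioo c d) := by
  set m := (c + d) / 2 with hm
  have hcm : c < m := by rw [hm]; linarith
  have hmd : m < d := by rw [hm]; linarith
  have hsub : Set.Ioo c d ⊆ Set.Ioc c m ∪ Set.Ioc m d := by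
    intro z hz
    rcases le_or_gt z m with h | h
    · exact Or.inl ⟨hz.1, h⟩
    · exact Or.inr ⟨h, hz.2.le⟩
  have hmeas : AEStronglyMeasurable (fun z => Real.sqrt (C / ((z - c) * (d - z)))) volume := by
    apply Measurable.aestronglyMeasurable
    fun_prop
  have h1 : IntegrableOn (fun z => Real.sqrt (C / ((z - c) * (d - z)))) (Set.Ioc c m) := by
    have hint : IntervalIntegrable (fun z : ℝ => (z - c) ^ (-(1/2) : ℝ)) volume c m := by
      have h0 := intervalIntegral.intervalIntegrable_rpow' (a := 0) (b := m - c)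
        (r := -(1/2)) (by norm_num)
      have := h0.comp_sub_right c
      simpa using this
    have hint' : IntegrableOn (fun z : ℝ => Real.sqrt (2 * C / (d - c)) * (z - c) ^ (-(1/2) : ℝ))
        (Set.Ioc c m) :=
      ((intervalIntegrable_iff_integrableOn_Ioc_of_le hcm.le).mp hint).const_mul _
    refine hint'.mono' hmeas.restrict ?_
    filter_upwards [ae_restrict_mem measurableSet_Ioc] with z hz
    have hzc : (0:ℝ) < z - c := by linarith [hz.1]
    have hdz : (0:ℝ) < d - z := by
      have := hz.2; rw [hm] at this; linarith
    rw [Real.norm_eq_abs, abs_of_nonneg (Real.sqrt_nonneg _)]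
    have hr : (z - c) ^ (-(1/2) : ℝ) = Real.sqrt ((z - c)⁻¹) := by
      rw [Real.rpow_neg hzc.le, ← Real.sqrt_eq_rpow, ← Real.sqrt_inv]
    rw [hr, ← Real.sqrt_mul (div_nonneg (by linarith) (by linarith))]
    apply Real.sqrt_le_sqrt
    rw [← div_eq_mul_inv, div_div, div_le_div_iff₀ (mul_pos hzc hdz)
      (mul_pos (by linarith : (0:ℝ) < d - c) hzc)]
    have hzm : z ≤ m := hz.2
    rw [hm] at hzm
    nlinarith [mul_nonneg (mul_nonneg hC hzc.le) (show (0:ℝ) ≤ d + c - 2 * z by linarith)]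
  have h2 : IntegrableOn (fun z => Real.sqrt (C / ((z - c) * (d - z)))) (Set.Ioc m d) := by
    have hint : IntervalIntegrable (fun z : ℝ => (d - z) ^ (-(1/2) : ℝ)) volume m d := by
      have h0 := intervalIntegral.intervalIntegrable_rpow' (a := 0) (b := d - m)
        (r := -(1/2)) (by norm_num)
      have := h0.comp_sub_left d
      simpa [sub_sub_cancel] using this.symm
    have hint' : IntegrableOn (fun z : ℝ => Real.sqrt (2 * C / (d - c)) * (d - z) ^ (-(1/2) : ℝ))
        (Set.Ioc m d) :=
      ((intervalIntegrable_iff_integrableOn_Ioc_of_le hmd.le).mp hint).const_mul _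
    refine hint'.mono' hmeas.restrict ?_
    filter_upwards [ae_restrict_mem measurableSet_Ioc] with z hz
    have hzc : (0:ℝ) < z - c := by
      have := hz.1; rw [hm] at this; linarith
    rw [Real.norm_eq_abs, abs_of_nonneg (Real.sqrt_nonneg _)]
    rcases lt_or_eq_of_le hz.2 with hdz' | hdz'
    · have hdz : (0:ℝ) < d - z := by linarith
      have hr : (d - z) ^ (-(1/2) : ℝ) = Real.sqrt ((d - z)⁻¹) := by
        rw [Real.rpow_neg hdz.le, ← Real.sqrt_eq_rpow, ← Real.sqrt_inv]
      rw [hr, ← Real.sqrt_mul (div_nonneg (by linarith) (by linarith))]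
      apply Real.sqrt_le_sqrt
      rw [← div_eq_mul_inv, div_div, div_le_div_iff₀ (mul_pos hzc hdz)
        (mul_pos (by linarith : (0:ℝ) < d - c) hdz)]
      have hzm : m < z := hz.1
      rw [hm] at hzm
      nlinarith [mul_nonneg (mul_nonneg hC hdz.le) (show (0:ℝ) ≤ 2 * z - d - c by linarith)]
    · have hdz : d - z = 0 := by linarith
      rw [hdz]
      simp [Real.zero_rpow (by norm_num : (-(1/2):ℝ) ≠ 0)]
  exact ((h1.union h2).mono_set hsub)

lemma master (c d C : ℝ) (hcd : c < d) (hC : 0 ≤ C) (F : ℝ → ℝ)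
    (hFc : ContinuousOn F (Set.Ioo c d))
    (hF0 : ∀ z ∈ Set.Ioo c d, 0 ≤ F z)
    (hFb : ∀ z ∈ Set.Ioo c d, F z ≤ C / ((z - c) * (d - z))) :
    Tendsto (fun t : ℝ => ∫ z in c..d, t * Real.sqrt (F z / (t ^ 2 - z ^ 2))) atTop
      (𝓝 (∫ z in Set.Ioo c d, Real.sqrt (F z))) := by
  have hrw : ∀ t : ℝ, (∫ z in c..d, t * Real.sqrt (F z / (t ^ 2 - z ^ 2)))
      = ∫ z in Set.Ioo c d, t * Real.sqrt (F z / (t ^ 2 - z ^ 2)) := by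
    intro t
    rw [intervalIntegral.integral_of_le hcd.le, MeasureTheory.integral_Ioc_eq_integral_Ioo]
  simp only [hrw]
  set M := max |c| |d| with hMdef
  have hM0 : 0 ≤ M := le_trans (abs_nonneg c) (le_max_left _ _)
  have hzM : ∀ z ∈ Set.Ioo c d, z ^ 2 ≤ M ^ 2 := by
    intro z hz
    have h1 : z ≤ M := le_trans hz.2.le (le_trans (le_abs_self d) (le_max_right _ _))
    have h2 : -M ≤ z := by
      have h3 : -|c| ≤ c := neg_abs_le c
      have h4 : |c| ≤ M := le_max_left _ _
      linarith [hz.1]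
    nlinarith
  have hpos : ∀ t : ℝ, 2 * M + 1 ≤ t → ∀ z ∈ Set.Ioo c d, 0 < t ^ 2 - z ^ 2 := by
    intro t ht z hz
    have := hzM z hz
    nlinarith
  have hle2 : ∀ t : ℝ, 2 * M + 1 ≤ t → ∀ z ∈ Set.Ioo c d,
      t / Real.sqrt (t ^ 2 - z ^ 2) ≤ 2 := by
    intro t ht z hz
    have hp := hpos t ht z hz
    have hs : 0 < Real.sqrt (t ^ 2 - z ^ 2) := Real.sqrt_pos.mpr hp
    rw [div_le_iff₀ hs]
    nlinarith [Real.sq_sqrt hp.le, Real.sqrt_nonneg (t ^ 2 - z ^ 2), hzM z hz]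
  refine MeasureTheory.tendsto_integral_filter_of_dominated_convergence
    (fun z => 2 * Real.sqrt (C / ((z - c) * (d - z)))) ?_ ?_ ?_ ?_
  · filter_upwards [eventually_ge_atTop (2 * M + 1)] with t ht
    apply ContinuousOn.aestronglyMeasurable _ measurableSet_Ioo
    apply ContinuousOn.mul continuousOn_const
    apply Real.continuous_sqrt.comp_continuousOn
    exact hFc.div (by fun_prop) (fun z hz => (hpos t ht z hz).ne')
  · filter_upwards [eventually_ge_atTop (2 * M + 1)] with t ht
    filter_upwards [ae_restrict_mem measurableSet_Ioo] with z hz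
    have hp := hpos t ht z hz
    have ht0 : 0 < t := by nlinarith
    have h0 := hF0 z hz
    rw [Real.norm_eq_abs, abs_of_nonneg (by positivity), Real.sqrt_div h0,
      show t * (Real.sqrt (F z) / Real.sqrt (t ^ 2 - z ^ 2))
        = Real.sqrt (F z) * (t / Real.sqrt (t ^ 2 - z ^ 2)) by ring]
    have h2 := hle2 t ht z hz
    have hb : Real.sqrt (F z) ≤ Real.sqrt (C / ((z - c) * (d - z))) :=
      Real.sqrt_le_sqrt (hFb z hz)
    have h3 : 0 ≤ t / Real.sqrt (t ^ 2 - z ^ 2) := by positivity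
    nlinarith [mul_le_mul hb h2 h3 (Real.sqrt_nonneg (C / ((z - c) * (d - z))))]
  · exact (integrableOn_bound c d C hcd hC).const_mul 2
  · filter_upwards [ae_restrict_mem measurableSet_Ioo] with z hz
    have heq : (fun t : ℝ => t * Real.sqrt (F z / (t ^ 2 - z ^ 2)))
        = fun t : ℝ => Real.sqrt (F z) * (t / Real.sqrt (t ^ 2 - z ^ 2)) := by
      funext t
      rw [Real.sqrt_div (hF0 z hz)]
      ring
    rw [heq]
    simpa using (ratio_tendsto z).const_mul (Real.sqrt (F z))

lemma case_I2 (a b : ℝ) (ha : 1 < a) (hab : a ≤ b) :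
    Tendsto (fun t : ℝ => t * I2 a b t) atTop
      (𝓝 (∫ z in (-a)..(-1),
        (1 / Real.sqrt (z ^ 2 - 1)) * Real.sqrt ((b - z) / (a + z)))) := by
  have hb1 : 1 < b := lt_of_lt_of_le ha hab
  have hcd : -a < -1 := by linarith
  have heq : (fun t : ℝ => t * I2 a b t)
      = fun t : ℝ => ∫ z in (-a)..(-1),
          t * Real.sqrt ((b - z) / ((z ^ 2 - 1) * (z + a)) / (t ^ 2 - z ^ 2)) := by
    have harg : ∀ t z : ℝ, (b - z) / ((t ^ 2 - z ^ 2) * (z ^ 2 - 1) * (z + a))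
        = (b - z) / ((z ^ 2 - 1) * (z + a)) / (t ^ 2 - z ^ 2) := by
      intro t z
      rw [div_div]
      ring_nf
    funext t
    rw [I2, ← intervalIntegral.integral_const_mul]
    simp_rw [harg t]
  have htgt : (∫ z in Set.Ioo (-a) (-1), Real.sqrt ((b - z) / ((z ^ 2 - 1) * (z + a))))
      = ∫ z in (-a)..(-1), (1 / Real.sqrt (z ^ 2 - 1)) * Real.sqrt ((b - z) / (a + z)) := by
    rw [intervalIntegral.integral_of_le hcd.le, MeasureTheory.integral_Ioc_eq_integral_Ioo]
    apply MeasureTheory.setIntegral_congr_fun measurableSet_Ioo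
    intro z hz
    have h1 : (0:ℝ) < z ^ 2 - 1 := by nlinarith [hz.1, hz.2]
    have h2 : (0:ℝ) < z + a := by linarith [hz.1]
    have h3 : (0:ℝ) ≤ b - z := by nlinarith [hz.2]
    show Real.sqrt ((b - z) / ((z ^ 2 - 1) * (z + a)))
        = 1 / Real.sqrt (z ^ 2 - 1) * Real.sqrt ((b - z) / (a + z))
    rw [show (b - z) / ((z ^ 2 - 1) * (z + a)) = ((b - z) / (z + a)) / (z ^ 2 - 1) by
        rw [div_div]; ring_nf,
      Real.sqrt_div (by positivity), show a + z = z + a by ring]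
    ring
  rw [heq, ← htgt]
  apply master (-a) (-1) ((a + b) ^ 2) hcd (by positivity)
  · apply ContinuousOn.div (by fun_prop) (by fun_prop)
    intro z hz
    have h1 : (0:ℝ) < z ^ 2 - 1 := by nlinarith [hz.1, hz.2]
    have h2 : (0:ℝ) < z + a := by linarith [hz.1]
    exact (mul_pos h1 h2).ne'
  · intro z hz
    have h1 : (0:ℝ) < z ^ 2 - 1 := by nlinarith [hz.1, hz.2]
    have h2 : (0:ℝ) < z + a := by linarith [hz.1]
    have h3 : (0:ℝ) ≤ b - z := by nlinarith [hz.2]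
    exact div_nonneg h3 (mul_pos h1 h2).le
  · intro z hz
    obtain ⟨hz1, hz2⟩ := hz
    have h1 : (0:ℝ) < z ^ 2 - 1 := by nlinarith
    have h2 : (0:ℝ) < z + a := by linarith
    have h3 : (0:ℝ) < -1 - z := by linarith
    have hzc : (0:ℝ) < z - -a := by linarith
    rw [div_le_div_iff₀ (mul_pos h1 h2) (mul_pos hzc h3)]
    have hinner : (0:ℝ) ≤ (a + b) ^ 2 * (1 - z) - (b - z) := by nlinarith
    nlinarith [mul_nonneg (mul_nonneg h2.le h3.le) hinner]

lemma case_J2 (a b : ℝ) (ha : 1 < a) (hab : a ≤ b) :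
    Tendsto (fun t : ℝ => t * J2 a b t) atTop
      (𝓝 (∫ z in (-a)..(-1),
        (1 / Real.sqrt (z ^ 2 - 1)) * Real.sqrt ((a + z) / (b - z)))) := by
  have hb1 : 1 < b := lt_of_lt_of_le ha hab
  have hcd : -a < -1 := by linarith
  have heq : (fun t : ℝ => t * J2 a b t)
      = fun t : ℝ => ∫ z in (-a)..(-1),
          t * Real.sqrt ((z + a) / ((z ^ 2 - 1) * (b - z)) / (t ^ 2 - z ^ 2)) := by
    have harg : ∀ t z : ℝ, (z + a) / ((t ^ 2 - z ^ 2) * (z ^ 2 - 1) * (b - z))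
        = (z + a) / ((z ^ 2 - 1) * (b - z)) / (t ^ 2 - z ^ 2) := by
      intro t z
      rw [div_div]
      ring_nf
    funext t
    rw [J2, ← intervalIntegral.integral_const_mul]
    simp_rw [harg t]
  have htgt : (∫ z in Set.Ioo (-a) (-1), Real.sqrt ((z + a) / ((z ^ 2 - 1) * (b - z))))
      = ∫ z in (-a)..(-1), (1 / Real.sqrt (z ^ 2 - 1)) * Real.sqrt ((a + z) / (b - z)) := by
    rw [intervalIntegral.integral_of_le hcd.le, MeasureTheory.integral_Ioc_eq_integral_Ioo]
    apply MeasureTheory.setIntegral_congr_fun measurableSet_Ioo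
    intro z hz
    have h1 : (0:ℝ) < z ^ 2 - 1 := by nlinarith [hz.1, hz.2]
    have h2 : (0:ℝ) ≤ z + a := by linarith [hz.1]
    have h3 : (0:ℝ) < b - z := by nlinarith [hz.2]
    show Real.sqrt ((z + a) / ((z ^ 2 - 1) * (b - z)))
        = 1 / Real.sqrt (z ^ 2 - 1) * Real.sqrt ((a + z) / (b - z))
    rw [show (z + a) / ((z ^ 2 - 1) * (b - z)) = ((z + a) / (b - z)) / (z ^ 2 - 1) by
        rw [div_div]; ring_nf,
      Real.sqrt_div (by positivity), show a + z = z + a by ring]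
    ring
  rw [heq, ← htgt]
  apply master (-a) (-1) ((a + b) ^ 2) hcd (by positivity)
  · apply ContinuousOn.div (by fun_prop) (by fun_prop)
    intro z hz
    have h1 : (0:ℝ) < z ^ 2 - 1 := by nlinarith [hz.1, hz.2]
    have h3 : (0:ℝ) < b - z := by nlinarith [hz.2]
    exact (mul_pos h1 h3).ne'
  · intro z hz
    have h1 : (0:ℝ) < z ^ 2 - 1 := by nlinarith [hz.1, hz.2]
    have h2 : (0:ℝ) ≤ z + a := by linarith [hz.1]
    have h3 : (0:ℝ) < b - z := by nlinarith [hz.2]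
    exact div_nonneg h2 (mul_pos h1 h3).le
  · intro z hz
    obtain ⟨hz1, hz2⟩ := hz
    have h1 : (0:ℝ) < z ^ 2 - 1 := by nlinarith
    have h2 : (0:ℝ) < z + a := by linarith
    have h3 : (0:ℝ) < -1 - z := by linarith
    have h4 : (0:ℝ) < b - z := by nlinarith
    have hzc : (0:ℝ) < z - -a := by linarith
    rw [div_le_div_iff₀ (mul_pos h1 h4) (mul_pos hzc h3)]
    have hprod : (4:ℝ) ≤ (1 - z) * (b - z) := by nlinarith
    have hsq : (z + a) ^ 2 ≤ (a + b) ^ 2 := by nlinarith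
    have hinner : (0:ℝ) ≤ (a + b) ^ 2 * ((1 - z) * (b - z)) - (z + a) ^ 2 := by
      nlinarith [sq_nonneg (a + b)]
    nlinarith [mul_nonneg h3.le hinner]

lemma case_I4 (a b : ℝ) (ha : 1 < a) (hab : a ≤ b) :
    Tendsto (fun t : ℝ => t * I4 a b t) atTop
      (𝓝 (∫ z in (1:ℝ)..b,
        (1 / Real.sqrt (z ^ 2 - 1)) * Real.sqrt ((b - z) / (a + z)))) := by
  have hb1 : (1:ℝ) < b := lt_of_lt_of_le ha hab
  have heq : (fun t : ℝ => t * I4 a b t)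
      = fun t : ℝ => ∫ z in (1:ℝ)..b,
          t * Real.sqrt ((b - z) / ((z ^ 2 - 1) * (z + a)) / (t ^ 2 - z ^ 2)) := by
    have harg : ∀ t z : ℝ, (b - z) / ((t ^ 2 - z ^ 2) * (z ^ 2 - 1) * (z + a))
        = (b - z) / ((z ^ 2 - 1) * (z + a)) / (t ^ 2 - z ^ 2) := by
      intro t z
      rw [div_div]
      ring_nf
    funext t
    rw [I4, ← intervalIntegral.integral_const_mul]
    simp_rw [harg t]
  have htgt : (∫ z in Set.Ioo (1:ℝ) b, Real.sqrt ((b - z) / ((z ^ 2 - 1) * (z + a))))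
      = ∫ z in (1:ℝ)..b, (1 / Real.sqrt (z ^ 2 - 1)) * Real.sqrt ((b - z) / (a + z)) := by
    rw [intervalIntegral.integral_of_le hb1.le, MeasureTheory.integral_Ioc_eq_integral_Ioo]
    apply MeasureTheory.setIntegral_congr_fun measurableSet_Ioo
    intro z hz
    have h1 : (0:ℝ) < z ^ 2 - 1 := by nlinarith [hz.1]
    have h2 : (0:ℝ) < z + a := by linarith [hz.1]
    have h3 : (0:ℝ) ≤ b - z := by linarith [hz.2]
    show Real.sqrt ((b - z) / ((z ^ 2 - 1) * (z + a)))
        = 1 / Real.sqrt (z ^ 2 - 1) * Real.sqrt ((b - z) / (a + z))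
    rw [show (b - z) / ((z ^ 2 - 1) * (z + a)) = ((b - z) / (z + a)) / (z ^ 2 - 1) by
        rw [div_div]; ring_nf,
      Real.sqrt_div (by positivity), show a + z = z + a by ring]
    ring
  rw [heq, ← htgt]
  apply master 1 b ((a + b) ^ 2) hb1 (by positivity)
  · apply ContinuousOn.div (by fun_prop) (by fun_prop)
    intro z hz
    have h1 : (0:ℝ) < z ^ 2 - 1 := by nlinarith [hz.1]
    have h2 : (0:ℝ) < z + a := by linarith [hz.1]
    exact (mul_pos h1 h2).ne'
  · intro z hz
    have h1 : (0:ℝ) < z ^ 2 - 1 := by nlinarith [hz.1]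
    have h2 : (0:ℝ) < z + a := by linarith [hz.1]
    have h3 : (0:ℝ) ≤ b - z := by linarith [hz.2]
    exact div_nonneg h3 (mul_pos h1 h2).le
  · intro z hz
    obtain ⟨hz1, hz2⟩ := hz
    have h1 : (0:ℝ) < z ^ 2 - 1 := by nlinarith
    have h2 : (0:ℝ) < z + a := by linarith
    have h3 : (0:ℝ) < z - 1 := by linarith
    have h4 : (0:ℝ) < b - z := by linarith
    rw [div_le_div_iff₀ (mul_pos h1 h2) (mul_pos h3 h4)]
    have hprod : (4:ℝ) ≤ (z + 1) * (z + a) := by nlinarith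
    have hsq : (b - z) ^ 2 ≤ (a + b) ^ 2 := by nlinarith
    have hinner : (0:ℝ) ≤ (a + b) ^ 2 * ((z + 1) * (z + a)) - (b - z) ^ 2 := by
      nlinarith [sq_nonneg (a + b)]
    nlinarith [mul_nonneg h3.le hinner]

lemma case_J4 (a b : ℝ) (ha : 1 < a) (hab : a ≤ b) :
    Tendsto (fun t : ℝ => t * J4 a b t) atTop
      (𝓝 (∫ z in (1:ℝ)..b,
        (1 / Real.sqrt (z ^ 2 - 1)) * Real.sqrt ((a + z) / (b - z)))) := by
  have hb1 : (1:ℝ) < b := lt_of_lt_of_le ha hab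
  have heq : (fun t : ℝ => t * J4 a b t)
      = fun t : ℝ => ∫ z in (1:ℝ)..b,
          t * Real.sqrt ((z + a) / ((z ^ 2 - 1) * (b - z)) / (t ^ 2 - z ^ 2)) := by
    have harg : ∀ t z : ℝ, (z + a) / ((t ^ 2 - z ^ 2) * (z ^ 2 - 1) * (b - z))
        = (z + a) / ((z ^ 2 - 1) * (b - z)) / (t ^ 2 - z ^ 2) := by
      intro t z
      rw [div_div]
      ring_nf
    funext t
    rw [J4, ← intervalIntegral.integral_const_mul]
    simp_rw [harg t]
  have htgt : (∫ z in Set.Ioo (1:ℝ) b, Real.sqrt ((z + a) / ((z ^ 2 - 1) * (b - z))))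
      = ∫ z in (1:ℝ)..b, (1 / Real.sqrt (z ^ 2 - 1)) * Real.sqrt ((a + z) / (b - z)) := by
    rw [intervalIntegral.integral_of_le hb1.le, MeasureTheory.integral_Ioc_eq_integral_Ioo]
    apply MeasureTheory.setIntegral_congr_fun measurableSet_Ioo
    intro z hz
    have h1 : (0:ℝ) < z ^ 2 - 1 := by nlinarith [hz.1]
    have h2 : (0:ℝ) ≤ z + a := by linarith [hz.1]
    have h3 : (0:ℝ) < b - z := by linarith [hz.2]
    show Real.sqrt ((z + a) / ((z ^ 2 - 1) * (b - z)))
        = 1 / Real.sqrt (z ^ 2 - 1) * Real.sqrt ((a + z) / (b - z))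
    rw [show (z + a) / ((z ^ 2 - 1) * (b - z)) = ((z + a) / (b - z)) / (z ^ 2 - 1) by
        rw [div_div]; ring_nf,
      Real.sqrt_div (by positivity), show a + z = z + a by ring]
    ring
  rw [heq, ← htgt]
  apply master 1 b ((a + b) ^ 2) hb1 (by positivity)
  · apply ContinuousOn.div (by fun_prop) (by fun_prop)
    intro z hz
    have h1 : (0:ℝ) < z ^ 2 - 1 := by nlinarith [hz.1]
    have h3 : (0:ℝ) < b - z := by linarith [hz.2]
    exact (mul_pos h1 h3).ne'
  · intro z hz
    have h1 : (0:ℝ) < z ^ 2 - 1 := by nlinarith [hz.1]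
    have h2 : (0:ℝ) ≤ z + a := by linarith [hz.1]
    have h3 : (0:ℝ) < b - z := by linarith [hz.2]
    exact div_nonneg h2 (mul_pos h1 h3).le
  · intro z hz
    obtain ⟨hz1, hz2⟩ := hz
    have h1 : (0:ℝ) < z ^ 2 - 1 := by nlinarith
    have h2 : (0:ℝ) < z + a := by linarith
    have h3 : (0:ℝ) < z - 1 := by linarith
    have h4 : (0:ℝ) < b - z := by linarith
    rw [div_le_div_iff₀ (mul_pos h1 h4) (mul_pos h3 h4)]
    have hinner : (0:ℝ) ≤ (a + b) ^ 2 * (z + 1) - (z + a) := by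
      nlinarith [sq_nonneg (a + b)]
    nlinarith [mul_nonneg (mul_nonneg h3.le h4.le) hinner]

/-- Limits of the rescaled period integrals `t·I₂`, `t·J₂`, `t·I₄`, `t·J₄` as `t → ∞`. -/
theorem stmt7 (a b : ℝ) (ha : 1 < a) (hab : a ≤ b) :
    Tendsto (fun t : ℝ => t * I2 a b t) atTop
      (𝓝 (∫ z in (-a)..(-1),
        (1 / Real.sqrt (z ^ 2 - 1)) * Real.sqrt ((b - z) / (a + z)))) ∧
    Tendsto (fun t : ℝ => t * J2 a b t) atTop
      (𝓝 (∫ z in (-a)..(-1),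
        (1 / Real.sqrt (z ^ 2 - 1)) * Real.sqrt ((a + z) / (b - z)))) ∧
    Tendsto (fun t : ℝ => t * I4 a b t) atTop
      (𝓝 (∫ z in (1:ℝ)..b,
        (1 / Real.sqrt (z ^ 2 - 1)) * Real.sqrt ((b - z) / (a + z)))) ∧
    Tendsto (fun t : ℝ => t * J4 a b t) atTop
      (𝓝 (∫ z in (1:ℝ)..b,
        (1 / Real.sqrt (z ^ 2 - 1)) * Real.sqrt ((a + z) / (b - z)))) := by
  exact ⟨case_I2 a b ha hab, case_J2 a b ha hab, case_I4 a b ha hab, case_J4 a b ha hab⟩
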